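/- Let 𝒳 be a full subcategory of an abelian category 𝒜. The collection of short exact sequences 0 → A → B → C → 0 with Hom(X,B) → Hom(X,C) surjective for all X ∈ 𝒳 endows 𝒜 with the structure of an exact category (i.e., it is closed under pushout, pullback, and composition of admissible epics and monics). -/

import Mathlib

open CategoryTheory CategoryTheory.Limits CategoryTheory.Category

universe w v u v' u'

namespace RelDer

variable {𝒜 : Type u} [Category.{v} 𝒜] [Abelian 𝒜]

/-- `g` is an `F`-epimorphism: it fits into an `F`-exact short exact sequence. -/
def FEpi (F : ShortComplex 𝒜 → Prop) {B C : 𝒜} (g : B ⟶ C) : Prop :=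
  ∃ (K : 𝒜) (k : K ⟶ B) (w : k ≫ g = 0), F (ShortComplex.mk k g w)

/-- `f` is an `F`-monomorphism. -/
def FMono (F : ShortComplex 𝒜 → Prop) {A B : 𝒜} (f : A ⟶ B) : Prop :=
  ∃ (C : 𝒜) (g : B ⟶ C) (w : f ≫ g = 0), F (ShortComplex.mk f g w)

/-- `P` is `F`-projective: `Hom(P,-)` sends `F`-exact sequences to exact sequences. -/
def FProjective (F : ShortComplex 𝒜 → Prop) (P : 𝒜) : Prop :=
  ∀ (S : ShortComplex 𝒜), F S → ∀ (p : P ⟶ S.X₃), ∃ q : P ⟶ S.X₂, q ≫ S.g = p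

/-- `I` is `F`-injective. -/
def FInjective (F : ShortComplex 𝒜 → Prop) (I : 𝒜) : Prop :=
  ∀ (S : ShortComplex 𝒜), F S → ∀ (p : S.X₁ ⟶ I), ∃ q : S.X₂ ⟶ I, S.f ≫ q = p

/-- `F` has enough projectives. -/
def HasEnoughFProjectives (F : ShortComplex 𝒜 → Prop) : Prop :=
  ∀ M : 𝒜, ∃ (P : 𝒜) (g : P ⟶ M), FProjective F P ∧ FEpi F g

/-- `F` has enough injectives. -/
def HasEnoughFInjectives (F : ShortComplex 𝒜 → Prop) : Prop :=
  ∀ M : 𝒜, ∃ (I : 𝒜) (f : M ⟶ I), FInjective F I ∧ FMono F f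

lemma image_ι_comp_d (X : CochainComplex 𝒜 ℤ) (i : ℤ) :
    image.ι (X.d (i-1) i) ≫ X.d i (i+1) = 0 := by
  rw [← cancel_epi (factorThruImage (X.d (i-1) i)), image.fac_assoc,
    HomologicalComplex.d_comp_d, comp_zero]

/-- The short complex `Im d^{i-1} → X^i → Im d^i` associated to a cochain complex. -/
noncomputable def imagesShortComplex (X : CochainComplex 𝒜 ℤ) (i : ℤ) : ShortComplex 𝒜 :=
  ShortComplex.mk (image.ι (X.d (i-1) i)) (factorThruImage (X.d i (i+1)))
    (by rw [← cancel_mono (image.ι (X.d i (i+1))), assoc, image.fac, zero_comp,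
      image_ι_comp_d])

/-- A complex is `F`-acyclic if each `0 → Im d^{i-1} → X^i → Im d^i → 0` is `F`-exact. -/
def FAcyclic (F : ShortComplex 𝒜 → Prop) (X : CochainComplex 𝒜 ℤ) : Prop :=
  ∀ i : ℤ, F (imagesShortComplex X i)

/-- A chain map is an `F`-quasi-isomorphism if its mapping cone is `F`-acyclic. -/
def FQuasiIso (F : ShortComplex 𝒜 → Prop) {X Y : CochainComplex 𝒜 ℤ} (f : X ⟶ Y) : Prop :=
  FAcyclic F (CochainComplex.mappingCone f)

def BoundedAbove (X : CochainComplex 𝒜 ℤ) : Prop :=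
  ∃ n : ℤ, ∀ i, n < i → IsZero (X.X i)

def Bounded (X : CochainComplex 𝒜 ℤ) : Prop :=
  ∃ a b : ℤ, ∀ i, (i < a ∨ b < i) → IsZero (X.X i)

/-- An equivalence of (pre)triangulated categories. -/
structure TriangleEquivalence (C : Type u) (D : Type u') [Category.{v} C] [Category.{v'} D]
    [HasShift C ℤ] [HasShift D ℤ] [Preadditive C] [Preadditive D]
    [HasZeroObject C] [HasZeroObject D]
    [∀ n : ℤ, (shiftFunctor C n).Additive] [∀ n : ℤ, (shiftFunctor D n).Additive]
    [Pretriangulated C] [Pretriangulated D] where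
  e : C ≌ D
  commShift : e.functor.CommShift ℤ
  isTriangulated : letI := commShift; e.functor.IsTriangulated

/-- Two maps are stably equal if their difference factors through an object satisfying `P`. -/
def stableHomRel (P : 𝒜 → Prop) : HomRel 𝒜 := fun {X Y} f g =>
  ∃ (Z : 𝒜) (_ : P Z) (a : X ⟶ Z) (b : Z ⟶ Y), f - g = a ≫ b

/-- The stable category of `𝒜` modulo objects satisfying `P`. -/
abbrev StableCategory (P : 𝒜 → Prop) := CategoryTheory.Quotient (stableHomRel P)

/-- The complex `Hom(P^•, Y)` of abelian groups, whose homology computes relative Ext. -/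
noncomputable def homComplex (P : CochainComplex 𝒜 ℤ) (Y : 𝒜) :
    HomologicalComplex AddCommGrpCat (ComplexShape.up ℤ).symm :=
  ((preadditiveYoneda.obj Y).mapHomologicalComplex (ComplexShape.up ℤ).symm).obj P.op

/-- The relative Ext group `Ext^i_F(X,Y)` computed from an `F`-projective resolution `P` of
`X` as the `i`-th cohomology of `Hom(P^•,Y)`. -/
noncomputable def extFGroup (P : CochainComplex 𝒜 ℤ) (Y : 𝒜) (i : ℤ) : AddCommGrpCat :=
  (homComplex P Y).homology (-i)

/-- `P`, together with the augmentation `ε`, is an `F`-projective resolution of `X`. -/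
def IsFProjResolution (F : ShortComplex 𝒜 → Prop) (X : 𝒜) (P : CochainComplex 𝒜 ℤ)
    (ε : P ⟶ (CochainComplex.singleFunctor 𝒜 0).obj X) : Prop :=
  (∀ i : ℤ, 0 < i → IsZero (P.X i)) ∧ (∀ i : ℤ, FProjective F (P.X i)) ∧ FQuasiIso F ε

/-- `X` has `F`-projective dimension at most `m`. -/
def FProjDimLe (F : ShortComplex 𝒜 → Prop) (X : 𝒜) (m : ℕ) : Prop :=
  ∃ (P : CochainComplex 𝒜 ℤ) (ε : P ⟶ (CochainComplex.singleFunctor 𝒜 0).obj X),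
    IsFProjResolution F X P ε ∧ ∀ i : ℤ, i < -(m : ℤ) → IsZero (P.X i)

/-- `I`, together with the augmentation `ε`, is an `F`-injective coresolution of `X`. -/
def IsFInjCoresolution (F : ShortComplex 𝒜 → Prop) (X : 𝒜) (I : CochainComplex 𝒜 ℤ)
    (ε : (CochainComplex.singleFunctor 𝒜 0).obj X ⟶ I) : Prop :=
  (∀ i : ℤ, i < 0 → IsZero (I.X i)) ∧ (∀ i : ℤ, FInjective F (I.X i)) ∧ FQuasiIso F ε

/-- `X` has `F`-injective dimension at most `m`. -/
def FInjDimLe (F : ShortComplex 𝒜 → Prop) (X : 𝒜) (m : ℕ) : Prop :=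
  ∃ (I : CochainComplex 𝒜 ℤ) (ε : (CochainComplex.singleFunctor 𝒜 0).obj X ⟶ I),
    IsFInjCoresolution F X I ε ∧ ∀ i : ℤ, (m : ℤ) < i → IsZero (I.X i)

/-- The `F`-projective dimension of `X`, valued in `ℕ∞`. -/
noncomputable def FProjDim (F : ShortComplex 𝒜 → Prop) (X : 𝒜) : ℕ∞ :=
  sInf {n : ℕ∞ | ∃ m : ℕ, n = m ∧ FProjDimLe F X m}

/-- The `F`-injective dimension of `X`, valued in `ℕ∞`. -/
noncomputable def FInjDim (F : ShortComplex 𝒜 → Prop) (X : 𝒜) : ℕ∞ :=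
  sInf {n : ℕ∞ | ∃ m : ℕ, n = m ∧ FInjDimLe F X m}

/-- The `F`-global dimension. -/
noncomputable def FGlobalDim (F : ShortComplex 𝒜 → Prop) : ℕ∞ :=
  ⨆ X : 𝒜, FProjDim F X

/-- The `F`-finitistic dimension. -/
noncomputable def FFinitisticDim (F : ShortComplex 𝒜 → Prop) : ℕ∞ :=
  ⨆ X : {X : 𝒜 // FProjDim F X ≠ ⊤}, FProjDim F X.1

/-- The class of all short exact sequences: the absolute (non-relative) exact structure. -/
def allExact : ShortComplex 𝒜 → Prop := fun S => S.ShortExact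

/-- `M` belongs to `add G`. -/
def InAdd (G M : 𝒜) : Prop :=
  haveI : HasFiniteBiproducts 𝒜 := Abelian.hasFiniteBiproducts
  ∃ (n : ℕ) (N : 𝒜), Nonempty ((M ⊞ N) ≅ (⨁ fun _ : Fin n => G))

/-- The structure `Triangulated.Subcategory` of the older Mathlib (removed since), restated
with its old fields. -/
structure Triangulated.Subcategory (C : Type u') [Category.{v'} C] [HasZeroObject C]
    [HasShift C ℤ] [Preadditive C] [∀ n : ℤ, (shiftFunctor C n).Additive]
    [Pretriangulated C] where
  P : C → Prop
  zero' : ∃ (Z : C) (_ : IsZero Z), P Z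
  shift (X : C) (n : ℤ) : P X → P ((shiftFunctor C n).obj X)
  ext₂' (T : Pretriangulated.Triangle C)
    (_ : T ∈ (Pretriangulated.distinguishedTriangles : Set (Pretriangulated.Triangle C))) :
    P T.obj₁ → P T.obj₃ → ObjectProperty.isoClosure P T.obj₂

/-- `T` generates the objects satisfying `Gen` as a triangulated category
(closed under isomorphisms and retracts/direct summands). -/
def Generates {𝒯 : Type u'} [Category.{v'} 𝒯] [HasZeroObject 𝒯] [HasShift 𝒯 ℤ]
    [Preadditive 𝒯] [∀ n : ℤ, (shiftFunctor 𝒯 n).Additive] [Pretriangulated 𝒯]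
    (T : 𝒯) (Gen : 𝒯 → Prop) : Prop :=
  ∀ (S : Triangulated.Subcategory 𝒯),
    (∀ X Y : 𝒯, (X ≅ Y) → S.P X → S.P Y) →
    (∀ X Y : 𝒯, (∃ (r : X ⟶ Y) (s : Y ⟶ X), s ≫ r = 𝟙 Y) → S.P X → S.P Y) →
    S.P T → ∀ X : 𝒯, Gen X → S.P X

universe u₁ v₁ u₂ v₂ u₃ v₃

/-- A short exact sequence is `F_𝒳`-exact if `Hom(X, -)` sends it to a short exact
sequence for all `X` in `𝒳`. -/
def FXExact {𝒜 : Type u} [Category.{v} 𝒜] [Abelian 𝒜] (𝒳 : 𝒜 → Prop)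
    (S : ShortComplex 𝒜) : Prop :=
  S.ShortExact ∧ ∀ X : 𝒜, 𝒳 X → ∀ x : X ⟶ S.X₃, ∃ y : X ⟶ S.X₂, y ≫ S.g = x

/-- The class of `F_𝒳`-exact sequences gives `𝒜` the structure of an exact category:
it is closed under pushout, pullback, and composition of admissible epics and monics. -/
theorem statement2 {𝒜 : Type u} [Category.{v} 𝒜] [Abelian 𝒜] (𝒳 : 𝒜 → Prop) :
    -- closed under pushout
    (∀ (S S' : ShortComplex 𝒜), S'.ShortExact →
      ∀ (f : S.X₁ ⟶ S'.X₁) (β : S.X₂ ⟶ S'.X₂) (γ : S.X₃ ≅ S'.X₃),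
        IsPushout f S.f S'.f β → β ≫ S'.g = S.g ≫ γ.hom →
        FXExact 𝒳 S → FXExact 𝒳 S') ∧
    -- closed under pullback
    (∀ (S S' : ShortComplex 𝒜), S'.ShortExact →
      ∀ (h : S'.X₃ ⟶ S.X₃) (β : S'.X₂ ⟶ S.X₂) (γ : S'.X₁ ≅ S.X₁),
        IsPullback β S'.g S.g h → S'.f ≫ β = γ.hom ≫ S.f →
        FXExact 𝒳 S → FXExact 𝒳 S') ∧
    -- composition of admissible epics
    (∀ (A B C : 𝒜) (g : A ⟶ B) (h : B ⟶ C),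
      FEpi (FXExact 𝒳) g → FEpi (FXExact 𝒳) h → FEpi (FXExact 𝒳) (g ≫ h)) ∧
    -- composition of admissible monics
    (∀ (A B C : 𝒜) (f : A ⟶ B) (g : B ⟶ C),
      FMono (FXExact 𝒳) f → FMono (FXExact 𝒳) g → FMono (FXExact 𝒳) (f ≫ g)) := by
  refine ⟨?_, ?_, ?_, ?_⟩
  · -- pushout
    rintro S S' hS' f β γ hpush hcomm ⟨hse, hlift⟩
    refine ⟨hS', fun X hX x => ?_⟩
    obtain ⟨y, hy⟩ := hlift X hX (x ≫ γ.inv)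
    exact ⟨y ≫ β, by rw [assoc, hcomm, ← assoc, hy, assoc, γ.inv_hom_id, comp_id]⟩
  · -- pullback
    rintro S S' hS' h β γ hpull hcomm ⟨hse, hlift⟩
    refine ⟨hS', fun X hX x => ?_⟩
    obtain ⟨y, hy⟩ := hlift X hX (x ≫ h)
    exact ⟨hpull.lift y x hy, hpull.lift_snd y x hy⟩
  · -- composition of epics
    rintro A B C g h ⟨K, k, wk, hK⟩ ⟨L, l, wl, hL⟩
    haveI : Epi g := hK.1.epi_g
    haveI : Epi h := hL.1.epi_g
    refine ⟨kernel (g ≫ h), kernel.ι _, kernel.condition _, ?_, fun X hX x => ?_⟩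
    · exact ShortComplex.ShortExact.mk
        (ShortComplex.exact_of_f_is_kernel _ (kernelIsKernel _))
    · obtain ⟨y, hy⟩ := hL.2 X hX x
      obtain ⟨z, hz⟩ := hK.2 X hX y
      exact ⟨z, by dsimp at hy hz ⊢; rw [← assoc, hz, hy]⟩
  · -- composition of monics
    rintro A B C f g ⟨D, p, wp, hS1se, hS1lift⟩ ⟨E, q, wq, hS2se, hS2lift⟩
    haveI : Mono f := hS1se.mono_f
    haveI : Mono g := hS2se.mono_f
    haveI : Epi p := hS1se.epi_g
    haveI : Epi q := hS2se.epi_g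
    have hex1 : (ShortComplex.mk f p wp).Exact := hS1se.exact
    have hex2 : (ShortComplex.mk g q wq).Exact := hS2se.exact
    set π : C ⟶ cokernel (f ≫ g) := cokernel.π (f ≫ g) with hπ
    refine ⟨cokernel (f ≫ g), π, cokernel.condition _, ?_, fun X hX x => ?_⟩
    · exact ShortComplex.ShortExact.mk
        (ShortComplex.exact_of_g_is_cokernel _ (cokernelIsCokernel _))
    · -- the lifting property for `π`
      dsimp at x ⊢
      -- `r : cokernel (f ≫ g) ⟶ E` with `π ≫ r = q`
      have hfgq : (f ≫ g) ≫ q = 0 := by rw [assoc, wq, comp_zero]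
      set r : cokernel (f ≫ g) ⟶ E := cokernel.desc (f ≫ g) q hfgq with hr
      have hπr : π ≫ r = q := cokernel.π_desc _ _ _
      -- `j : D ⟶ cokernel (f ≫ g)` with `p ≫ j = g ≫ π`
      have hfgπ : f ≫ (g ≫ π) = 0 := by rw [← assoc, cokernel.condition]
      set j : D ⟶ cokernel (f ≫ g) := hex1.desc (g ≫ π) hfgπ with hj
      have hpj : p ≫ j = g ≫ π := hex1.g_desc _ _
      -- the square `g, p, π, j` is a pushout
      have hpo : IsPushout g p π j := by
        refine IsPushout.of_isColimit (c := PushoutCocone.mk π j hpj.symm)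
          (PushoutCocone.IsColimit.mk hpj.symm
            (fun s => cokernel.desc (f ≫ g) s.inl
              (by rw [assoc, s.condition, ← assoc, wp, zero_comp]))
            (fun s => cokernel.π_desc _ _ _) (fun s => ?_) (fun s m h1 h2 => ?_)
            )
        · rw [← cancel_epi p, ← assoc]
          change (p ≫ j) ≫ _ = _
          rw [hpj, assoc, cokernel.π_desc, s.condition]
        · rw [← cancel_epi π]
          change π ≫ m = _
          rw [cokernel.π_desc]
          exact h1
      haveI : Mono j := by
        have : j = pushout.inr g p ≫ hpo.isoPushout.inv := by
          rw [hpo.inr_isoPushout_inv]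
        rw [this]
        haveI : Mono (pushout.inr g p) := Abelian.mono_pushout_of_mono_f g p
        exact mono_comp _ _
      -- `r` is a cokernel of `j`
      have wjr : j ≫ r = 0 := by
        rw [← cancel_epi p, ← assoc, hpj, assoc, hπr, wq, comp_zero]
      haveI : Epi r := by
        have := hπr
        exact epi_of_epi_fac this
      have hcolim : IsColimit (CokernelCofork.ofπ r wjr) := by
        refine CokernelCofork.IsColimit.ofπ' r wjr (fun {T} t ht => ?_)
        refine ⟨hex2.desc (π ≫ t) ?_, ?_⟩
        · rw [← assoc, ← hpj, assoc, ht, comp_zero]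
        · rw [← cancel_epi π, ← assoc, hπr]
          exact hex2.g_desc _ _
      have hexjr : (ShortComplex.mk j r wjr).Exact :=
        ShortComplex.exact_of_g_is_cokernel _ hcolim
      -- now lift `x`
      obtain ⟨y, hy⟩ := hS2lift X hX (x ≫ r)
      dsimp at hy
      have hd : (x - y ≫ π) ≫ r = 0 := by
        rw [Preadditive.sub_comp, assoc, hπr, hy, sub_self]
      obtain ⟨d', hd'⟩ := hexjr.lift' _ hd
      obtain ⟨z, hz⟩ := hS1lift X hX d'
      dsimp at hz hd'
      refine ⟨y + z ≫ g, ?_⟩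
      rw [Preadditive.add_comp, assoc, ← hpj, ← assoc, hz, hd']
      abel

end RelDer
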